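/- arXiv:1307.0052 — 9 statements merged into one kernel-verified Lean document; each statement's English description precedes it below -/
import Mathlib

section
/- Let 0 < P < P'. Suppose there exists a Hermitian positive semidefinite matrix X* ∈ S(P) that attains λ̃(P) (i.e. min_{1≤i≤N} f_i(X*)/(γ_i g_i(X*)) = λ̃(P) and min_{1≤i≤N} f_i(X)/(γ_i g_i(X)) ≤ λ̃(P) for every X ∈ S(P)), and that λ̃(P) > 0. Suppose also that λ̃(P') is attained by some X ∈ S(P'). Then λ̃(P') > λ̃(P); that is, the optimal value of the relaxed max-min SINR problem is a strictly increasing function of the relay power budget. -/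
open Matrix ComplexOrder

/-- The minimum of a finite family of reals indexed by `Fin N`, `N > 0`. -/
noncomputable def minOver {N : ℕ} (hN : 0 < N) (v : Fin N → ℝ) : ℝ :=
  Finset.univ.inf' (Finset.univ_nonempty_iff.mpr (Fin.pos_iff_nonempty.mp hN)) v

lemma psd_smul_real {n : Type*} [Fintype n] {t : ℝ} (ht : 0 ≤ t)
    {A : Matrix n n ℂ} (hA : A.PosSemidef) : ((t : ℂ) • A).PosSemidef := by
  refine Matrix.PosSemidef.of_dotProduct_mulVec_nonneg ?_ (fun x => ?_)
  · simp [Matrix.IsHermitian, Matrix.conjTranspose_smul, hA.1.eq, Complex.star_def,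
      Complex.conj_ofReal]
  · have h := hA.dotProduct_mulVec_nonneg x
    have : dotProduct (star x) (((t : ℂ) • A) *ᵥ x)
        = (t : ℂ) * dotProduct (star x) (A *ᵥ x) := by
      simp [Matrix.smul_mulVec, dotProduct_smul, smul_eq_mul]
    rw [this]
    exact mul_nonneg (by exact_mod_cast Complex.zero_le_real.mpr ht) h

lemma psd_trace_re_nonneg {n : Type*} [Fintype n] [DecidableEq n]
    {A : Matrix n n ℂ} (hA : A.PosSemidef) : 0 ≤ A.trace.re := by
  rw [Matrix.trace, Complex.re_sum]
  refine Finset.sum_nonneg fun i _ => ?_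
  have h := hA.re_dotProduct_nonneg (Pi.single i 1)
  simpa [dotProduct, Pi.single_apply, mulVec, Finset.sum_eq_single i] using h

lemma psd_trace_mul_re_nonneg {n : Type*} [Fintype n] [DecidableEq n]
    {A B : Matrix n n ℂ} (hA : A.PosSemidef) (hB : B.PosSemidef) :
    0 ≤ (Matrix.trace (A * B)).re := by
  obtain ⟨C, rfl⟩ : ∃ C : Matrix n n ℂ, B = Cᴴ * C := by
    open scoped MatrixOrder in exact CStarAlgebra.nonneg_iff_eq_star_mul_self.mp hB.nonneg
  have : Matrix.trace (A * (Cᴴ * C)) = Matrix.trace (C * A * Cᴴ) := by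
    rw [← Matrix.mul_assoc, Matrix.trace_mul_cycle]
  rw [this]
  exact psd_trace_re_nonneg (hA.mul_mul_conjTranspose_same C)

/-- The optimal value `λ̃(P)` of the relaxed max-min SINR problem is strictly increasing in the
relay power budget `P`: if `0 < P < P'`, `λ̃(P)` is attained at `Xs ∈ S(P)` with `λ̃(P) > 0`,
and `λ̃(P')` is attained at `X' ∈ S(P')`, then `λ̃(P) < λ̃(P')`. -/
theorem stmt0 {M N : ℕ} (hM : 0 < M) (hN : 0 < N)
    (E1 E2 : Fin N → Matrix (Fin M) (Fin M) ℂ)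
    (hE1 : ∀ i, (E1 i).PosSemidef) (hE2 : ∀ i, (E2 i).PosSemidef)
    (E0 : Matrix (Fin M) (Fin M) ℂ) (hE0 : E0.PosSemidef)
    (γ σ : Fin N → ℝ) (hγ : ∀ i, 0 < γ i) (hσ : ∀ i, 0 < σ i)
    (P P' lam lam' : ℝ) (hP : 0 < P) (hPP' : P < P')
    (Xs : Matrix (Fin M) (Fin M) ℂ)
    (hXsPSD : Xs.PosSemidef) (hXsP : (Matrix.trace (E0 * Xs)).re ≤ P)
    (hXsval : minOver hN (fun i =>
        (Matrix.trace (E1 i * Xs)).re /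
          (γ i * ((Matrix.trace (E2 i * Xs)).re + σ i ^ 2))) = lam)
    (hXsopt : ∀ X : Matrix (Fin M) (Fin M) ℂ, X.PosSemidef →
        (Matrix.trace (E0 * X)).re ≤ P →
        minOver hN (fun i =>
          (Matrix.trace (E1 i * X)).re /
            (γ i * ((Matrix.trace (E2 i * X)).re + σ i ^ 2))) ≤ lam)
    (hlam : 0 < lam)
    (X' : Matrix (Fin M) (Fin M) ℂ)
    (hX'PSD : X'.PosSemidef) (hX'P : (Matrix.trace (E0 * X')).re ≤ P')
    (hX'val : minOver hN (fun i =>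
        (Matrix.trace (E1 i * X')).re /
          (γ i * ((Matrix.trace (E2 i * X')).re + σ i ^ 2))) = lam')
    (hX'opt : ∀ X : Matrix (Fin M) (Fin M) ℂ, X.PosSemidef →
        (Matrix.trace (E0 * X)).re ≤ P' →
        minOver hN (fun i =>
          (Matrix.trace (E1 i * X)).re /
            (γ i * ((Matrix.trace (E2 i * X)).re + σ i ^ 2))) ≤ lam') :
    lam < lam' := by
  set t : ℝ := P' / P with ht_def
  have ht1 : 1 < t := (one_lt_div hP).mpr hPP'
  have ht0 : 0 ≤ t := le_of_lt (lt_trans one_pos ht1)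
  set Y : Matrix (Fin M) (Fin M) ℂ := (t : ℂ) • Xs with hY_def
  have hYPSD : Y.PosSemidef := psd_smul_real ht0 hXsPSD
  have htr : ∀ E : Matrix (Fin M) (Fin M) ℂ,
      (Matrix.trace (E * Y)).re = t * (Matrix.trace (E * Xs)).re := by
    intro E
    rw [hY_def, Matrix.mul_smul, Matrix.trace_smul]
    simp [smul_eq_mul, Complex.mul_re, Complex.ofReal_re, Complex.ofReal_im]
  have hYP : (Matrix.trace (E0 * Y)).re ≤ P' := by
    rw [htr E0]
    calc t * (Matrix.trace (E0 * Xs)).re ≤ t * P :=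
          mul_le_mul_of_nonneg_left hXsP ht0
      _ = P' := by rw [ht_def]; field_simp
  -- per-index facts
  have hne : (Finset.univ : Finset (Fin N)).Nonempty :=
    Finset.univ_nonempty_iff.mpr (Fin.pos_iff_nonempty.mp hN)
  have hg : ∀ i, 0 ≤ (Matrix.trace (E2 i * Xs)).re :=
    fun i => psd_trace_mul_re_nonneg (hE2 i) hXsPSD
  have hden : ∀ i, 0 < γ i * ((Matrix.trace (E2 i * Xs)).re + σ i ^ 2) := by
    intro i
    exact mul_pos (hγ i) (by nlinarith [hg i, pow_pos (hσ i) 2])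
  have hratio : ∀ i, lam ≤ (Matrix.trace (E1 i * Xs)).re /
      (γ i * ((Matrix.trace (E2 i * Xs)).re + σ i ^ 2)) := by
    intro i
    rw [← hXsval]
    exact Finset.inf'_le _ (Finset.mem_univ i)
  have hf : ∀ i, 0 < (Matrix.trace (E1 i * Xs)).re := by
    intro i
    have h := (le_div_iff₀ (hden i)).mp (hratio i)
    nlinarith [mul_pos hlam (hden i)]
  -- each ratio at Y strictly exceeds the ratio at Xs
  have hstrict : ∀ i,
      (Matrix.trace (E1 i * Xs)).re /
        (γ i * ((Matrix.trace (E2 i * Xs)).re + σ i ^ 2)) <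
      (Matrix.trace (E1 i * Y)).re /
        (γ i * ((Matrix.trace (E2 i * Y)).re + σ i ^ 2)) := by
    intro i
    rw [htr (E1 i), htr (E2 i)]
    have hfi := hf i
    have hgi := hg i
    have hγi := hγ i
    have hs2 : 0 < σ i ^ 2 := pow_pos (hσ i) 2
    have hd1 : 0 < γ i * ((Matrix.trace (E2 i * Xs)).re + σ i ^ 2) := hden i
    have hd2 : 0 < γ i * (t * (Matrix.trace (E2 i * Xs)).re + σ i ^ 2) := by
      refine mul_pos hγi ?_
      nlinarith
    rw [div_lt_div_iff₀ hd1 hd2]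
    nlinarith [mul_pos (sub_pos.mpr ht1)
      (mul_pos (mul_pos hfi hγi) hs2)]
  -- the min at Y strictly exceeds lam
  obtain ⟨j, -, hj⟩ := Finset.exists_mem_eq_inf' hne (fun i =>
      (Matrix.trace (E1 i * Y)).re /
        (γ i * ((Matrix.trace (E2 i * Y)).re + σ i ^ 2)))
  have hlt : lam < minOver hN (fun i =>
      (Matrix.trace (E1 i * Y)).re /
        (γ i * ((Matrix.trace (E2 i * Y)).re + σ i ^ 2))) := by
    have h1 : minOver hN (fun i =>
        (Matrix.trace (E1 i * Y)).re /
          (γ i * ((Matrix.trace (E2 i * Y)).re + σ i ^ 2))) =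
        (Matrix.trace (E1 j * Y)).re /
          (γ j * ((Matrix.trace (E2 j * Y)).re + σ j ^ 2)) := hj
    rw [h1]
    exact lt_of_le_of_lt (hratio j) (hstrict j)
  exact lt_of_lt_of_le hlt (hX'opt Y hYPSD hYP)
end

section
/- Let P_R > 0 and let T = { X Hermitian positive semidefinite : f_i(X) ≥ γ_i g_i(X) for all i = 1,…,N } be the feasible set of the power minimization problem, with optimal value P_min = inf_{X ∈ T} Re tr(E_0 X). Suppose: (a) λ̃(P_R) = 1 and it is attained at some X^opt ∈ S(P_R) (i.e. min_i f_i(X^opt)/(γ_i g_i(X^opt)) = 1 and min_i f_i(X)/(γ_i g_i(X)) ≤ 1 for all X ∈ S(P_R)); (b) P_min is attained at some X̃ ∈ T (i.e. Re tr(E_0 X̃) = P_min); (c) λ̃(P_min) is attained by some element of S(P_min). Then P_min = P_R, Re tr(E_0 X^opt) = P_R, and X^opt is an optimal solution of the power minimization problem, i.e. X^opt ∈ T and Re tr(E_0 X^opt) = P_min. -/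
open Matrix ComplexOrder


lemma trace_nonneg_of_psd {n : ℕ} {C : Matrix (Fin n) (Fin n) ℂ} (hC : C.PosSemidef) :
    0 ≤ (Matrix.trace C).re := by
  have h : ∀ i, 0 ≤ (C i i).re := by
    intro i
    have h0 := hC.re_dotProduct_nonneg (Pi.single i 1)
    have he : dotProduct (star (Pi.single i 1)) (C *ᵥ Pi.single i 1) = C i i := by
      simp [Matrix.mulVec_single, dotProduct, Pi.single_apply]
    rw [he] at h0
    exact h0
  rw [Matrix.trace, Complex.re_sum]
  exact Finset.sum_nonneg fun i _ => h i

open scoped MatrixOrder in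
lemma trace_mul_re_nonneg {n : ℕ} {A B : Matrix (Fin n) (Fin n) ℂ}
    (hA : A.PosSemidef) (hB : B.PosSemidef) : 0 ≤ (Matrix.trace (A * B)).re := by
  have hs := CFC.sqrt_mul_sqrt_self A hA.nonneg
  have hpsd : (CFC.sqrt A * B * CFC.sqrt A).PosSemidef := by
    have := hB.conjTranspose_mul_mul_same (CFC.sqrt A)
    rwa [(CFC.sqrt_nonneg A).posSemidef.1.eq] at this
  have key : Matrix.trace (CFC.sqrt A * CFC.sqrt A * B) = Matrix.trace (A * B) :=
    congrArg Matrix.trace (congrArg (· * B) hs)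
  have key2 : Matrix.trace (CFC.sqrt A * B * CFC.sqrt A) = Matrix.trace (CFC.sqrt A * CFC.sqrt A * B) :=
    Matrix.trace_mul_cycle _ _ _
  have := trace_nonneg_of_psd hpsd
  rw [key2, key] at this
  exact this

lemma psd_smul {n : ℕ} {X : Matrix (Fin n) (Fin n) ℂ} (hX : X.PosSemidef)
    {c : ℝ} (hc : 0 ≤ c) : ((c : ℂ) • X).PosSemidef := by
  constructor
  · rw [Matrix.IsHermitian, Matrix.conjTranspose_smul, hX.1.eq]
    simp [Complex.conj_ofReal]
  · exact (hX.smul (show (0:ℂ) ≤ (c:ℂ) by exact_mod_cast hc)).2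


/-- If `λ̃(P_R) = 1` is attained at `Xopt ∈ S(P_R)`, the power-minimization optimal value
`Pmin` is attained at some `X̃` in the feasible set `T`, and `λ̃(Pmin)` is attained in
`S(Pmin)`, then `Pmin = P_R`, `Re tr(E0 Xopt) = P_R`, and `Xopt` is an optimal solution of
the power minimization problem. -/
theorem stmt1 {M N : ℕ} (hM : 0 < M) (hN : 0 < N)
    (E1 E2 : Fin N → Matrix (Fin M) (Fin M) ℂ)
    (hE1 : ∀ i, (E1 i).PosSemidef) (hE2 : ∀ i, (E2 i).PosSemidef)
    (E0 : Matrix (Fin M) (Fin M) ℂ) (hE0 : E0.PosSemidef)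
    (γ σ : Fin N → ℝ) (hγ : ∀ i, 0 < γ i) (hσ : ∀ i, 0 < σ i)
    (PR Pmin : ℝ) (hPR : 0 < PR)
    -- (a) `λ̃(P_R) = 1` is attained at `Xopt ∈ S(P_R)`
    (Xopt : Matrix (Fin M) (Fin M) ℂ)
    (hXoptPSD : Xopt.PosSemidef) (hXoptP : (Matrix.trace (E0 * Xopt)).re ≤ PR)
    (hXoptval : minOver hN (fun i =>
        (Matrix.trace (E1 i * Xopt)).re /
          (γ i * ((Matrix.trace (E2 i * Xopt)).re + σ i ^ 2))) = 1)
    (hXoptmax : ∀ X : Matrix (Fin M) (Fin M) ℂ, X.PosSemidef →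
        (Matrix.trace (E0 * X)).re ≤ PR →
        minOver hN (fun i =>
          (Matrix.trace (E1 i * X)).re /
            (γ i * ((Matrix.trace (E2 i * X)).re + σ i ^ 2))) ≤ 1)
    -- (b) `Pmin` is attained at some `X̃ ∈ T`
    (Xt : Matrix (Fin M) (Fin M) ℂ)
    (hXtPSD : Xt.PosSemidef)
    (hXtT : ∀ i, (Matrix.trace (E1 i * Xt)).re ≥
        γ i * ((Matrix.trace (E2 i * Xt)).re + σ i ^ 2))
    (hXtval : (Matrix.trace (E0 * Xt)).re = Pmin)
    (hPminlb : ∀ X : Matrix (Fin M) (Fin M) ℂ, X.PosSemidef →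
        (∀ i, (Matrix.trace (E1 i * X)).re ≥
          γ i * ((Matrix.trace (E2 i * X)).re + σ i ^ 2)) →
        Pmin ≤ (Matrix.trace (E0 * X)).re)
    -- (c) `λ̃(Pmin)` is attained by some element of `S(Pmin)`
    (hattain : ∃ X'' : Matrix (Fin M) (Fin M) ℂ, X''.PosSemidef ∧
        (Matrix.trace (E0 * X'')).re ≤ Pmin ∧
        ∀ X : Matrix (Fin M) (Fin M) ℂ, X.PosSemidef →
          (Matrix.trace (E0 * X)).re ≤ Pmin →
          minOver hN (fun i =>
            (Matrix.trace (E1 i * X)).re /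
              (γ i * ((Matrix.trace (E2 i * X)).re + σ i ^ 2))) ≤
          minOver hN (fun i =>
            (Matrix.trace (E1 i * X'')).re /
              (γ i * ((Matrix.trace (E2 i * X'')).re + σ i ^ 2)))) :
    Pmin = PR ∧ (Matrix.trace (E0 * Xopt)).re = PR ∧
      (∀ i, (Matrix.trace (E1 i * Xopt)).re ≥
        γ i * ((Matrix.trace (E2 i * Xopt)).re + σ i ^ 2)) ∧
      (Matrix.trace (E0 * Xopt)).re = Pmin := by
    -- Xopt is feasible for the power minimization problem
  have hdenom : ∀ (X : Matrix (Fin M) (Fin M) ℂ), X.PosSemidef → ∀ i,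
      0 < γ i * ((Matrix.trace (E2 i * X)).re + σ i ^ 2) := by
    intro X hX i
    have h2 := trace_mul_re_nonneg (hE2 i) hX
    have := hσ i
    have := hγ i
    positivity
  have hToptT : ∀ i, (Matrix.trace (E1 i * Xopt)).re ≥
      γ i * ((Matrix.trace (E2 i * Xopt)).re + σ i ^ 2) := by
    intro i
    have hle : minOver hN (fun i =>
        (Matrix.trace (E1 i * Xopt)).re /
          (γ i * ((Matrix.trace (E2 i * Xopt)).re + σ i ^ 2))) ≤
        (Matrix.trace (E1 i * Xopt)).re /
          (γ i * ((Matrix.trace (E2 i * Xopt)).re + σ i ^ 2)) :=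
      Finset.inf'_le _ (Finset.mem_univ i)
    rw [hXoptval] at hle
    exact (one_le_div (hdenom Xopt hXoptPSD i)).mp hle
  have h1 : Pmin ≤ (Matrix.trace (E0 * Xopt)).re := hPminlb Xopt hXoptPSD hToptT
  have h2 : Pmin ≤ PR := h1.trans hXoptP
  have hPmin0 : 0 ≤ Pmin := hXtval ▸ trace_mul_re_nonneg hE0 hXtPSD
  -- show PR ≤ Pmin by contradiction
  have h3 : PR ≤ Pmin := by
    by_contra hlt
    push_neg at hlt
    set m := max Pmin (PR / 2) with hm
    have hmpos : 0 < m := lt_max_of_lt_right (by linarith)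
    have hmlt : m < PR := max_lt hlt (by linarith)
    set c := PR / m with hc
    have hc1 : 1 < c := (one_lt_div hmpos).mpr hmlt
    have hc0 : (0:ℝ) ≤ c := by linarith
    have hcP : c * Pmin ≤ PR := by
      calc c * Pmin ≤ c * m := by
            exact mul_le_mul_of_nonneg_left (le_max_left _ _) hc0
        _ = PR := div_mul_cancel₀ _ hmpos.ne'
    set Y := (c : ℂ) • Xt with hY
    have hYPSD : Y.PosSemidef := psd_smul hXtPSD hc0
    have htr : ∀ (A : Matrix (Fin M) (Fin M) ℂ),
        (Matrix.trace (A * Y)).re = c * (Matrix.trace (A * Xt)).re := by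
      intro A
      rw [hY, Matrix.mul_smul, Matrix.trace_smul]
      simp [Complex.re_ofReal_mul]
    have hYP : (Matrix.trace (E0 * Y)).re ≤ PR := by
      rw [htr, hXtval]; exact hcP
    have hmax := hXoptmax Y hYPSD hYP
    have hgt : 1 < minOver hN (fun i =>
        (Matrix.trace (E1 i * Y)).re /
          (γ i * ((Matrix.trace (E2 i * Y)).re + σ i ^ 2))) := by
      rw [minOver, Finset.lt_inf'_iff]
      intro i _
      rw [htr (E1 i), htr (E2 i)]
      have hd := hdenom Y hYPSD i
      rw [htr (E2 i)] at hd
      rw [lt_div_iff₀ (by linarith), one_mul]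
      have hfeas := hXtT i
      have hg2 := trace_mul_re_nonneg (hE2 i) hXtPSD
      have hγi := hγ i
      have hσi := hσ i
      nlinarith [sq_nonneg (σ i), mul_pos hγi (mul_pos (sub_pos.mpr hc1) (pow_pos hσi 2))]
    linarith
  have hPeq : Pmin = PR := le_antisymm h2 h3
  refine ⟨hPeq, le_antisymm hXoptP (hPeq ▸ h1), hToptT, le_antisymm (hPeq ▸ hXoptP) h1⟩
end

section
/- Let G ⊆ ℝ^n be a nonempty normal set contained in the nonnegative orthant, and let z ∈ ℝ^n with z_i > 0 for all i. Suppose λ* ≥ 0 satisfies λ*·z ∈ G and α ≤ λ* for every α ≥ 0 with α·z ∈ G (i.e. λ* = max{α ≥ 0 : αz ∈ G} is attained). Set y = λ*·z and, for each i, let z(i) be the vector obtained from z by replacing its i-th coordinate by y_i. Then every w ∈ G with 0 ≤ w ≤ z satisfies w ≤ z(i) for some index i; equivalently, G ∩ [0, z] ⊆ ∪_{i=1}^{n} [0, z(i)]. -/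
/-- Polyblock reduction step: if `G ⊆ ℝⁿ₊` is a nonempty normal set, `z` has strictly positive
coordinates, and `λ* = max {α ≥ 0 : α • z ∈ G}` is attained (with `y = λ* • z` the projection
of `z` on `G`), then every `w ∈ G` with `0 ≤ w ≤ z` satisfies `w ≤ z(i)` for some `i`, where
`z(i)` is `z` with its `i`-th coordinate replaced by `y i = λ* * z i`. -/
theorem stmt3 {n : ℕ} (G : Set (Fin n → ℝ)) (hne : G.Nonempty)
    (hGpos : ∀ w ∈ G, (0 : Fin n → ℝ) ≤ w)
    (hnormal : ∀ z' z : Fin n → ℝ, 0 ≤ z' → z' ≤ z → z ∈ G → z' ∈ G)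
    (z : Fin n → ℝ) (hz : ∀ i, 0 < z i)
    (lam : ℝ) (hlam : 0 ≤ lam) (hlamG : lam • z ∈ G)
    (hmax : ∀ α : ℝ, 0 ≤ α → α • z ∈ G → α ≤ lam) :
    ∀ w ∈ G, (0 : Fin n → ℝ) ≤ w → w ≤ z →
      ∃ i : Fin n, w ≤ Function.update z i (lam * z i) := by
  intro w hwG hw0 hwz
  rcases Nat.eq_zero_or_pos n with hn | hn
  · -- n = 0 : hypotheses are contradictory
    subst hn
    exfalso
    have h1 : (lam + 1) • z = lam • z := by
      funext i; exact absurd i.2 (by omega)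
    have := hmax (lam + 1) (by linarith) (h1 ▸ hlamG)
    linarith
  by_contra hcon
  push_neg at hcon
  -- For each i, w i > lam * z i
  have key : ∀ i, lam * z i < w i := by
    intro i
    have hj := hcon i
    rw [Pi.le_def] at hj
    push_neg at hj
    obtain ⟨k, hk⟩ := hj
    by_cases hki : k = i
    · subst hki
      simpa using hk
    · exfalso
      rw [Function.update_of_ne hki] at hk
      exact absurd (hwz k) (not_le.mpr hk)
  -- take μ = min_i w i / z i
  haveI : Nonempty (Fin n) := Fin.pos_iff_nonempty.mp hn
  set μ := Finset.univ.inf' Finset.univ_nonempty (fun i => w i / z i) with hμ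
  obtain ⟨i0, -, hi0⟩ := Finset.exists_mem_eq_inf' Finset.univ_nonempty (fun i => w i / z i)
  have hμlam : lam < μ := by
    rw [hμ, hi0]
    rw [lt_div_iff₀ (hz i0)]
    exact key i0
  have hμ0 : 0 ≤ μ := le_of_lt (lt_of_le_of_lt hlam hμlam)
  have hμle : μ • z ≤ w := by
    intro i
    have h1 : μ ≤ w i / z i := by
      rw [hμ]; exact Finset.inf'_le _ (Finset.mem_univ i)
    have := mul_le_mul_of_nonneg_right h1 (le_of_lt (hz i))
    rw [div_mul_cancel₀ _ (ne_of_gt (hz i))] at this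
    simpa using this
  have hμG : μ • z ∈ G := hnormal _ w (by intro i; simpa using mul_nonneg hμ0 (le_of_lt (hz i))) hμle hwG
  exact absurd (hmax μ hμ0 hμG) (not_le.mpr hμlam)
end

section
/- Let G ⊆ ℝ^n be a nonempty normal set contained in the nonnegative orthant, let H = {w ∈ ℝ^n : w_i ≥ 1 for all i}, and let T be a finite set of nonnegative vectors whose polyblock P = ∪_{v∈T}[0,v] satisfies G ∩ H ⊆ P. Let z ∈ T have all coordinates strictly positive and z ∉ G, and suppose λ* ≥ 0 satisfies λ*·z ∈ G and α ≤ λ* for every α ≥ 0 with α·z ∈ G. Set y = λ*·z, let z(i) be z with its i-th coordinate replaced by y_i, and let T' = (T \ {z}) ∪ {z(1),…,z(n)} with polyblock P' = ∪_{v∈T'}[0,v]. Then G ∩ H ⊆ P' ⊆ P. -/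
/-- Validity of the polyblock outer approximation step: if the polyblock with vertex set `T`
contains `G ∩ H`, `z ∈ T` has strictly positive coordinates with `z ∉ G`, `λ* = max {α ≥ 0 :
α • z ∈ G}` is attained, and `T'` is obtained from `T` by replacing the vertex `z` with the
vertices `z(1), …, z(n)` (where `z(i)` is `z` with its `i`-th coordinate replaced by
`λ* * z i`), then `G ∩ H ⊆ P' ⊆ P` for the corresponding polyblocks. -/
theorem stmt4 {n : ℕ} (G : Set (Fin n → ℝ)) (hne : G.Nonempty)
    (hGpos : ∀ w ∈ G, (0 : Fin n → ℝ) ≤ w)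
    (hnormal : ∀ z' z : Fin n → ℝ, 0 ≤ z' → z' ≤ z → z ∈ G → z' ∈ G)
    (H : Set (Fin n → ℝ)) (hH : H = {w : Fin n → ℝ | ∀ i, 1 ≤ w i})
    (T : Finset (Fin n → ℝ)) (hT : ∀ v ∈ T, (0 : Fin n → ℝ) ≤ v)
    (hcover : G ∩ H ⊆ ⋃ v ∈ T, Set.Icc (0 : Fin n → ℝ) v)
    (z : Fin n → ℝ) (hzT : z ∈ T) (hz : ∀ i, 0 < z i) (hzG : z ∉ G)
    (lam : ℝ) (hlam : 0 ≤ lam) (hlamG : lam • z ∈ G)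
    (hmax : ∀ α : ℝ, 0 ≤ α → α • z ∈ G → α ≤ lam)
    (T' : Finset (Fin n → ℝ))
    (hT' : ∀ v : Fin n → ℝ, v ∈ T' ↔
      (v ∈ T ∧ v ≠ z) ∨ ∃ i : Fin n, v = Function.update z i (lam * z i)) :
    G ∩ H ⊆ (⋃ v ∈ T', Set.Icc (0 : Fin n → ℝ) v) ∧
      (⋃ v ∈ T', Set.Icc (0 : Fin n → ℝ) v) ⊆ ⋃ v ∈ T, Set.Icc (0 : Fin n → ℝ) v := by
  -- lam < 1
  have hlam1 : lam < 1 := by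
    by_contra h
    push_neg at h
    exact hzG (hnormal z (lam • z) (fun i => (hz i).le)
      (fun i => by
        have := hz i
        have : z i ≤ lam * z i := le_mul_of_one_le_left this.le h
        simpa using this) hlamG)
  constructor
  · -- G ∩ H ⊆ P'
    rcases Nat.eq_zero_or_pos n with hn | hn
    · subst hn
      exfalso
      obtain ⟨w, hw⟩ := hne
      exact hzG ((funext fun i => i.elim0 : z = w) ▸ hw)
    haveI : Nonempty (Fin n) := ⟨⟨0, hn⟩⟩
    intro x hx
    have hmem0 := hcover hx
    rw [Set.mem_iUnion₂] at hmem0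
    obtain ⟨v, hvT, hxv⟩ := hmem0
    by_cases hvz : v = z
    · rw [hvz] at hxv
      -- find i with x i ≤ lam * z i
      by_contra hcon
      simp only [Set.mem_iUnion, not_exists] at hcon
      have hall : ∀ i, lam * z i < x i := by
        intro i
        by_contra hi
        push_neg at hi
        refine hcon (Function.update z i (lam * z i)) ((hT' _).2 (Or.inr ⟨i, rfl⟩)) ⟨hxv.1, ?_⟩
        intro j
        by_cases hj : j = i
        · subst hj; simpa using hi
        · simp [Function.update_of_ne hj]; exact hxv.2 j
      set α := Finset.univ.inf' Finset.univ_nonempty (fun i => x i / z i) with hα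
      have hαgt : lam < α := by
        rw [hα, Finset.lt_inf'_iff]
        intro i _
        exact (lt_div_iff₀ (hz i)).2 (by linarith [hall i])
      have hα0 : 0 ≤ α := le_trans hlam hαgt.le
      have hle : α • z ≤ x := by
        intro i
        have : α ≤ x i / z i := Finset.inf'_le _ (Finset.mem_univ i)
        have h2 : α * z i ≤ x i := by
          have := (le_div_iff₀ (hz i)).1 ‹α ≤ x i / z i›
          linarith
        simpa using h2
      have hmem : α • z ∈ G :=
        hnormal (α • z) x (fun i => by simpa using mul_nonneg hα0 (hz i).le) hle hx.1
      exact absurd (hmax α hα0 hmem) (not_le.2 hαgt)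
    · exact Set.mem_iUnion.2 ⟨v, Set.mem_iUnion.2 ⟨(hT' _).2 (Or.inl ⟨hvT, hvz⟩), hxv⟩⟩
  · -- P' ⊆ P
    intro x hx
    rw [Set.mem_iUnion₂] at hx
    obtain ⟨v, hvT', hxv⟩ := hx
    rcases (hT' v).1 hvT' with ⟨hvT, _⟩ | ⟨i, rfl⟩
    · exact Set.mem_iUnion.2 ⟨v, Set.mem_iUnion.2 ⟨hvT, hxv⟩⟩
    · refine Set.mem_iUnion.2 ⟨z, Set.mem_iUnion.2 ⟨hzT, hxv.1, ?_⟩⟩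
      intro j
      refine le_trans (hxv.2 j) ?_
      by_cases hj : j = i
      · subst hj
        simp only [Function.update_self]
        nlinarith [hz j]
      · simp [Function.update_of_ne hj]
end

section
/- Let λ < λ' be real numbers. Suppose the set { min_{1≤i≤N} (f_i(X) − λ c_i g_i(X)) : X ∈ S } is bounded above, and F(λ') is attained at some X' ∈ S (i.e. min_i (f_i(X') − λ' c_i g_i(X')) = F(λ')). Then F(λ) > F(λ'); i.e., the parametric Dinkelbach value function F is strictly decreasing. -/
/-- The parametric Dinkelbach value function `F(λ) = sup_X min_i (f_i(X) − λ c_i g_i(X))` is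
strictly decreasing: if `λ < λ'`, the defining set for `F(λ)` is bounded above, and `F(λ')`
is attained at some `X'`, then `F(λ') < F(λ)`. -/
theorem stmt6 {S : Type*} [Nonempty S] {N : ℕ} (hN : 0 < N)
    (f g : Fin N → S → ℝ) (hg : ∀ i X, 0 < g i X)
    (c : Fin N → ℝ) (hc : ∀ i, 0 < c i)
    (lam lam' : ℝ) (h : lam < lam')
    (hbdd : BddAbove (Set.range fun X : S => minOver hN fun i => f i X - lam * c i * g i X))
    (X' : S)
    (hX' : minOver hN (fun i => f i X' - lam' * c i * g i X') =
      sSup (Set.range fun X : S => minOver hN fun i => f i X - lam' * c i * g i X)) :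
    sSup (Set.range fun X : S => minOver hN fun i => f i X - lam' * c i * g i X) <
      sSup (Set.range fun X : S => minOver hN fun i => f i X - lam * c i * g i X) := by
  rw [← hX']
  have hlt : minOver hN (fun i => f i X' - lam' * c i * g i X') <
      minOver hN (fun i => f i X' - lam * c i * g i X') := by
    unfold minOver
    obtain ⟨i0, _, hi0⟩ := Finset.exists_mem_eq_inf'
      (Finset.univ_nonempty_iff.mpr (Fin.pos_iff_nonempty.mp hN))
      (fun i => f i X' - lam * c i * g i X')
    rw [hi0]
    calc Finset.univ.inf' _ (fun i => f i X' - lam' * c i * g i X')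
        ≤ f i0 X' - lam' * c i0 * g i0 X' := Finset.inf'_le _ (Finset.mem_univ i0)
      _ < f i0 X' - lam * c i0 * g i0 X' := by
          have : lam * c i0 * g i0 X' < lam' * c i0 * g i0 X' := by
            apply mul_lt_mul_of_pos_right _ (hg i0 X')
            exact mul_lt_mul_of_pos_right h (hc i0)
          linarith
  exact lt_of_lt_of_le hlt (le_csSup hbdd ⟨X', rfl⟩)
end

section
/- Suppose the set { min_{1≤i≤N} f_i(X)/(c_i g_i(X)) : X ∈ S } is bounded above, and that for the given λ ∈ ℝ the set { min_{1≤i≤N} (f_i(X) − λ c_i g_i(X)) : X ∈ S } is bounded above. Then F(λ) ≤ 0 if and only if λ ≥ λ*. (In particular, the stopping test of the Dinkelbach-type algorithm, F(λ) ≤ 0, is passed exactly when the current parameter λ is at least the optimal max-min value λ*.) -/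
/-- The stopping test of the Dinkelbach-type algorithm is passed exactly at or above the
optimal max-min value: `F(λ) ≤ 0 ↔ λ* ≤ λ`, where
`F(λ) = sup_X min_i (f_i(X) − λ c_i g_i(X))` and `λ* = sup_X min_i f_i(X)/(c_i g_i(X))`. -/
theorem stmt7 {S : Type*} [Nonempty S] {N : ℕ} (hN : 0 < N)
    (f g : Fin N → S → ℝ) (hg : ∀ i X, 0 < g i X)
    (c : Fin N → ℝ) (hc : ∀ i, 0 < c i)
    (hbdd1 : BddAbove (Set.range fun X : S => minOver hN fun i => f i X / (c i * g i X)))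
    (lam : ℝ)
    (hbdd2 : BddAbove (Set.range fun X : S => minOver hN fun i => f i X - lam * c i * g i X)) :
    sSup (Set.range fun X : S => minOver hN fun i => f i X - lam * c i * g i X) ≤ 0 ↔
      sSup (Set.range fun X : S => minOver hN fun i => f i X / (c i * g i X)) ≤ lam := by
  have hne : ∀ (h : ℝ → ℝ), (Set.range fun X : S => h 0).Nonempty := fun _ => Set.range_nonempty _
  rw [csSup_le_iff hbdd2 (Set.range_nonempty _), csSup_le_iff hbdd1 (Set.range_nonempty _)]
  simp only [Set.forall_mem_range]
  apply forall_congr'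
  intro X
  unfold minOver
  rw [Finset.inf'_le_iff, Finset.inf'_le_iff]
  constructor <;> rintro ⟨i, -, hi⟩ <;> refine ⟨i, Finset.mem_univ i, ?_⟩
  · rw [div_le_iff₀ (mul_pos (hc i) (hg i X))]
    nlinarith
  · rw [div_le_iff₀ (mul_pos (hc i) (hg i X))] at hi
    nlinarith
end

section
/- Suppose the set { min_{1≤i≤N} f_i(X)/(c_i g_i(X)) : X ∈ S } is bounded above. Let λ ∈ ℝ and X ∈ S satisfy min_{1≤i≤N} (f_i(X) − λ c_i g_i(X)) > 0, and set λ⁺ = min_{1≤i≤N} f_i(X)/(c_i g_i(X)). Then λ < λ⁺ ≤ λ*; i.e., each iteration of the Dinkelbach-type algorithm strictly increases the parameter while never exceeding the optimal max-min value. -/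
/-- Each iteration of the Dinkelbach-type algorithm strictly increases the parameter while
never exceeding the optimal max-min value: if `min_i (f_i(X) − λ c_i g_i(X)) > 0` and
`λ⁺ = min_i f_i(X)/(c_i g_i(X))`, then `λ < λ⁺ ≤ λ*`. -/
theorem stmt8 {S : Type*} [Nonempty S] {N : ℕ} (hN : 0 < N)
    (f g : Fin N → S → ℝ) (hg : ∀ i X, 0 < g i X)
    (c : Fin N → ℝ) (hc : ∀ i, 0 < c i)
    (hbdd : BddAbove (Set.range fun X : S => minOver hN fun i => f i X / (c i * g i X)))
    (lam : ℝ) (X : S)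
    (hpos : 0 < minOver hN fun i => f i X - lam * c i * g i X) :
    lam < minOver hN (fun i => f i X / (c i * g i X)) ∧
      minOver hN (fun i => f i X / (c i * g i X)) ≤
        sSup (Set.range fun Y : S => minOver hN fun i => f i Y / (c i * g i Y)) := by
  constructor
  · rw [minOver, Finset.lt_inf'_iff]
    intro i _
    have h := (Finset.lt_inf'_iff _).mp hpos i (Finset.mem_univ i)
    have hcg : 0 < c i * g i X := mul_pos (hc i) (hg i X)
    rw [lt_div_iff₀ hcg]
    nlinarith
  · exact le_csSup hbdd ⟨X, rfl⟩
end

section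
/- Suppose the set { min_{1≤i≤N} f_i(X)/(c_i g_i(X)) : X ∈ S } is bounded above. Let X' ∈ S, set λ' = min_{1≤i≤N} f_i(X')/(c_i g_i(X')), and suppose min_{1≤i≤N} (f_i(X) − λ' c_i g_i(X)) ≤ 0 for every X ∈ S (i.e. F(λ') ≤ 0, the termination condition of the Dinkelbach-type algorithm). Then λ' = λ* and X' attains the supremum defining λ*; i.e., upon termination the algorithm outputs a global maximizer of the max-min fractional program. -/
/-- Upon termination, the Dinkelbach-type algorithm outputs a global maximizer of the
max-min fractional program: if `λ' = min_i f_i(X')/(c_i g_i(X'))` satisfies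
`min_i (f_i(X) − λ' c_i g_i(X)) ≤ 0` for all `X` (i.e. `F(λ') ≤ 0`), then `λ' = λ*` and `X'`
attains the supremum defining `λ*`. -/
theorem stmt9 {S : Type*} [Nonempty S] {N : ℕ} (hN : 0 < N)
    (f g : Fin N → S → ℝ) (hg : ∀ i X, 0 < g i X)
    (c : Fin N → ℝ) (hc : ∀ i, 0 < c i)
    (hbdd : BddAbove (Set.range fun X : S => minOver hN fun i => f i X / (c i * g i X)))
    (X' : S)
    (hterm : ∀ X : S,
      minOver hN (fun i => f i X -
        (minOver hN fun i => f i X' / (c i * g i X')) * c i * g i X) ≤ 0) :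
    minOver hN (fun i => f i X' / (c i * g i X')) =
        sSup (Set.range fun X : S => minOver hN fun i => f i X / (c i * g i X)) ∧
      ∀ X : S, minOver hN (fun i => f i X / (c i * g i X)) ≤
        minOver hN (fun i => f i X' / (c i * g i X')) := by
  set lam := minOver hN (fun i => f i X' / (c i * g i X')) with hlam
  have hub : ∀ X : S, minOver hN (fun i => f i X / (c i * g i X)) ≤ lam := by
    intro X
    obtain ⟨i, -, hi⟩ := (Finset.inf'_le_iff _).mp (hterm X)
    have hpos : 0 < c i * g i X := mul_pos (hc i) (hg i X)
    have hdiv : f i X / (c i * g i X) ≤ lam := by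
      rw [div_le_iff₀ hpos]
      nlinarith [hi]
    exact le_trans (Finset.inf'_le _ (Finset.mem_univ i)) hdiv
  refine ⟨le_antisymm (le_csSup hbdd ⟨X', rfl⟩) ?_, hub⟩
  exact csSup_le (Set.range_nonempty _) (by rintro _ ⟨X, rfl⟩; exact hub X)
end

section
/- Let S be a nonempty compact topological space, and for i = 1,…,N let f_i : S → ℝ and g_i : S → ℝ be continuous with g_i(X) > 0 for all X ∈ S, and let c_i > 0 be reals. Define λ* = max_{X ∈ S} min_{1≤i≤N} f_i(X)/(c_i g_i(X)). Consider sequences (X_j)_{j≥0} in S and (λ_j)_{j≥1} in ℝ defined by the Dinkelbach-type iteration: λ_{j+1} = min_{1≤i≤N} f_i(X_j)/(c_i g_i(X_j)) for j ≥ 0, and for j ≥ 1, X_j attains max_{X ∈ S} min_{1≤i≤N} (f_i(X) − λ_j c_i g_i(X)). Then the sequence (λ_j)_{j≥1} is nondecreasing, bounded above by λ*, and converges to λ*. -/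
lemma minOver_le {N : ℕ} (hN : 0 < N) (v : Fin N → ℝ) (i : Fin N) :
    minOver hN v ≤ v i := Finset.inf'_le _ (Finset.mem_univ i)

lemma le_minOver {N : ℕ} (hN : 0 < N) (v : Fin N → ℝ) (a : ℝ)
    (h : ∀ i, a ≤ v i) : a ≤ minOver hN v :=
  Finset.le_inf' _ _ fun i _ => h i

/-- Convergence of the Dinkelbach-type algorithm for the max-min fractional program over a
compact set: the parameter sequence `(λ_j)_{j ≥ 1}` generated by the iteration
`λ_{j+1} = min_i f_i(X_j)/(c_i g_i(X_j))`, where for `j ≥ 1` the point `X_j` maximizes the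
parametric objective `min_i (f_i(·) − λ_j c_i g_i(·))` over `S`, is nondecreasing, bounded
above by `λ* = max_X min_i f_i(X)/(c_i g_i(X))`, and converges to `λ*`. -/
theorem stmt11 {S : Type*} [TopologicalSpace S] [CompactSpace S] [Nonempty S]
    {N : ℕ} (hN : 0 < N)
    (f g : Fin N → S → ℝ) (hfc : ∀ i, Continuous (f i)) (hgc : ∀ i, Continuous (g i))
    (hg : ∀ i X, 0 < g i X) (c : Fin N → ℝ) (hc : ∀ i, 0 < c i)
    (lamstar : ℝ)
    (hstar : IsGreatest
      (Set.range fun X : S => minOver hN fun i => f i X / (c i * g i X)) lamstar)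
    (X : ℕ → S) (lam : ℕ → ℝ)
    (hiter : ∀ j : ℕ, lam (j + 1) = minOver hN fun i => f i (X j) / (c i * g i (X j)))
    (hmax : ∀ j : ℕ, 1 ≤ j → ∀ Y : S,
      minOver hN (fun i => f i Y - lam j * c i * g i Y) ≤
        minOver hN fun i => f i (X j) - lam j * c i * g i (X j)) :
    (∀ j : ℕ, 1 ≤ j → lam j ≤ lam (j + 1)) ∧
      (∀ j : ℕ, 1 ≤ j → lam j ≤ lamstar) ∧
      Filter.Tendsto lam Filter.atTop (nhds lamstar) := by
  have hcg : ∀ i (Y : S), 0 < c i * g i Y := fun i Y => mul_pos (hc i) (hg i Y)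
  obtain ⟨Xs, hXs⟩ := hstar.1
  simp only at hXs
  -- m : positive lower bound at Xs
  set m : ℝ := minOver hN (fun i => c i * g i Xs) with hm_def
  have hm : 0 < m := by
    apply lt_of_lt_of_le (b := minOver hN (fun i => c i * g i Xs)) _ le_rfl
    exact Finset.lt_inf'_iff _ |>.mpr fun i _ => hcg i Xs
  -- upper bound
  have hub : ∀ j : ℕ, 1 ≤ j → lam j ≤ lamstar := by
    intro j hj
    obtain ⟨k, rfl⟩ := Nat.exists_eq_add_of_le hj
    rw [add_comm, hiter k]
    exact hstar.2 ⟨X k, rfl⟩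
  -- key inequality A
  have hA : ∀ j : ℕ, 1 ≤ j →
      (lamstar - lam j) * m ≤ minOver hN (fun i => f i (X j) - lam j * c i * g i (X j)) := by
    intro j hj
    refine le_trans ?_ (hmax j hj Xs)
    apply le_minOver
    intro i
    have hr : lamstar ≤ f i Xs / (c i * g i Xs) := hXs ▸ minOver_le hN _ i
    have hd := hcg i Xs
    have h1 : lamstar * (c i * g i Xs) ≤ f i Xs := (le_div_iff₀ hd).mp hr
    have h2 : m ≤ c i * g i Xs := minOver_le hN _ i
    have h3 : 0 ≤ lamstar - lam j := sub_nonneg.mpr (hub j hj)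
    nlinarith [mul_le_mul_of_nonneg_left h2 h3]
  -- monotonicity
  have hmono : ∀ j : ℕ, 1 ≤ j → lam j ≤ lam (j + 1) := by
    intro j hj
    have h0 : 0 ≤ minOver hN (fun i => f i (X j) - lam j * c i * g i (X j)) :=
      le_trans (mul_nonneg (sub_nonneg.mpr (hub j hj)) hm.le) (hA j hj)
    rw [hiter j]
    apply le_minOver
    intro i
    have := le_trans h0 (minOver_le hN _ i)
    have hd := hcg i (X j)
    rw [le_div_iff₀ hd]
    nlinarith [this]
  -- upper bound M for c i * g i over S
  have hB : ∀ i : Fin N, ∃ B : ℝ, ∀ Y : S, c i * g i Y ≤ B := by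
    intro i
    obtain ⟨B, hB⟩ := (isCompact_range ((continuous_const.mul (hgc i)))).bddAbove
    exact ⟨B, fun Y => hB ⟨Y, rfl⟩⟩
  choose B hB using hB
  have hne : (Finset.univ : Finset (Fin N)).Nonempty :=
    Finset.univ_nonempty_iff.mpr (Fin.pos_iff_nonempty.mp hN)
  set M : ℝ := Finset.univ.sup' hne B with hM_def
  have hM : ∀ i (Y : S), c i * g i Y ≤ M :=
    fun i Y => le_trans (hB i Y) (Finset.le_sup' _ (Finset.mem_univ i))
  -- key inequality C
  have hC : ∀ j : ℕ, 1 ≤ j → (lamstar - lam j) * m ≤ M * (lam (j + 1) - lam j) := by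
    intro j hj
    refine le_trans (hA j hj) ?_
    obtain ⟨i₀, _, hi₀⟩ := Finset.exists_mem_eq_inf' hne
      (fun i => f i (X j) / (c i * g i (X j)))
    have hrat : lam (j + 1) = f i₀ (X j) / (c i₀ * g i₀ (X j)) := by
      rw [hiter j]; exact hi₀
    have hd := hcg i₀ (X j)
    have key : f i₀ (X j) - lam j * c i₀ * g i₀ (X j)
        = (c i₀ * g i₀ (X j)) * (lam (j + 1) - lam j) := by
      rw [hrat]
      field_simp [(hc i₀).ne', (hg i₀ (X j)).ne']
    refine le_trans (minOver_le hN _ i₀) ?_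
    rw [key]
    exact mul_le_mul_of_nonneg_right (hM i₀ (X j)) (sub_nonneg.mpr (hmono j hj))
  refine ⟨hmono, hub, ?_⟩
  -- convergence
  set μ : ℕ → ℝ := fun k => lam (k + 1) with hμ_def
  have hμmono : Monotone μ := monotone_nat_of_le_succ fun k => hmono (k + 1) (Nat.le_add_left 1 k)
  have hμbdd : BddAbove (Set.range μ) := ⟨lamstar, fun x ⟨k, hk⟩ => hk ▸ hub (k + 1) (Nat.le_add_left 1 k)⟩
  set L : ℝ := ⨆ k, μ k with hL_def
  have hμL : Filter.Tendsto μ Filter.atTop (nhds L) := tendsto_atTop_ciSup hμmono hμbdd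
  have hLle : L ≤ lamstar := ciSup_le fun k => hub (k + 1) (Nat.le_add_left 1 k)
  have hgeL : lamstar ≤ L := by
    have h1 : Filter.Tendsto (fun k => (lamstar - μ k) * m) Filter.atTop
        (nhds ((lamstar - L) * m)) :=
      ((tendsto_const_nhds.sub hμL).mul tendsto_const_nhds)
    have h2 : Filter.Tendsto (fun k => M * (μ (k + 1) - μ k)) Filter.atTop (nhds 0) := by
      have : Filter.Tendsto (fun k => μ (k + 1)) Filter.atTop (nhds L) :=
        hμL.comp (Filter.tendsto_add_atTop_nat 1)
      have h2' := Filter.Tendsto.const_mul M (this.sub hμL)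
      simpa using h2'
    have hle : (lamstar - L) * m ≤ 0 := by
      refine le_of_tendsto_of_tendsto' h1 h2 fun k => ?_
      have := hC (k + 1) (Nat.le_add_left 1 k)
      simpa [hμ_def] using this
    nlinarith
  have hLeq : L = lamstar := le_antisymm hLle hgeL
  rw [← hLeq]
  have htail : Filter.Tendsto (fun j => μ (j - 1)) Filter.atTop (nhds L) :=
    hμL.comp (Filter.tendsto_sub_atTop_nat 1)
  exact htail.congr' (Filter.eventually_atTop.mpr
    ⟨1, fun j hj => by simp [hμ_def, Nat.sub_add_cancel hj]⟩)
end
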